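/- arXiv:2009.12093 — 5 statements merged into one kernel-verified Lean document; each statement's English description precedes it below -/
import Mathlib

section
/- Let (x*, π*) be an optimal primal solution and optimal dual prices of the single-period multi-carrier market clearing LP with conversion orders. Then for each conversion order co from carrier c1 to c2 with efficiency η, conversion price P, and acceptance variable x_co ∈ [0,1]: if η·π*_{c2} − π*_{c1} − P > 0 then x*_co = 1; if η·π*_{c2} − π*_{c1} − P < 0 then x*_co = 0. -/
open Finset

section MultiCarrierConversion

variable {C O CO : Type*} [Fintype C] [Fintype O] [Fintype CO] [DecidableEq C]

/-- Total welfare: elementary order welfare minus conversion costs. -/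
def convWelfare (oc : O → C) (P Q : O → ℝ) (Qco Pco : CO → ℝ)
    (xo : O → ℝ) (xc : CO → ℝ) : ℝ :=
  ∑ o, P o * Q o * xo o - ∑ co, Pco co * Qco co * xc co

/-- Left-hand side of the balance constraint of carrier `c1`. -/
def convBalance (oc : O → C) (Q : O → ℝ) (src dst : CO → C) (Qco eta : CO → ℝ)
    (xo : O → ℝ) (xc : CO → ℝ) (c1 : C) : ℝ :=
  ∑ o ∈ univ.filter (fun o => oc o = c1), Q o * xo o
  + ∑ co ∈ univ.filter (fun co => src co = c1), Qco co * xc co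
  - ∑ co ∈ univ.filter (fun co => dst co = c1), eta co * Qco co * xc co

/-- Lagrangian obtained by relaxing the balance constraints with multipliers `pis`. -/
def convLagrangian (oc : O → C) (P Q : O → ℝ) (src dst : CO → C)
    (Qco eta Pco : CO → ℝ) (pis : C → ℝ) (xo : O → ℝ) (xc : CO → ℝ) : ℝ :=
  convWelfare oc P Q Qco Pco xo xc
    - ∑ c1, pis c1 * convBalance oc Q src dst Qco eta xo xc c1


lemma convSum_fiberwise {X : Type*} [Fintype X] (g : X → C) (f : X → ℝ) (h : C → ℝ) :
    ∑ c, h c * ∑ x ∈ univ.filter (fun x => g x = c), f x = ∑ x, h (g x) * f x := by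
  rw [← Finset.sum_fiberwise univ g (fun x => h (g x) * f x)]
  refine Finset.sum_congr rfl fun c _ => ?_
  rw [Finset.mul_sum]
  exact Finset.sum_congr rfl fun x hx => by rw [(Finset.mem_filter.mp hx).2]

lemma convLagrangian_eq (oc : O → C) (P Q : O → ℝ) (src dst : CO → C)
    (Qco eta Pco : CO → ℝ) (pis : C → ℝ) (xo : O → ℝ) (xc : CO → ℝ) :
    convLagrangian oc P Q src dst Qco eta Pco pis xo xc
      = ∑ o, (P o - pis (oc o)) * (Q o * xo o)
        + ∑ co, (eta co * pis (dst co) - pis (src co) - Pco co) * (Qco co * xc co) := by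
  have hA := convSum_fiberwise oc (fun o => Q o * xo o) pis
  have hB := convSum_fiberwise src (fun co => Qco co * xc co) pis
  have hC := convSum_fiberwise dst (fun co => eta co * Qco co * xc co) pis
  unfold convLagrangian convWelfare convBalance
  have hsum : ∑ c1, pis c1 *
      ((∑ o ∈ univ.filter (fun o => oc o = c1), Q o * xo o)
        + (∑ co ∈ univ.filter (fun co => src co = c1), Qco co * xc co)
        - ∑ co ∈ univ.filter (fun co => dst co = c1), eta co * Qco co * xc co)
      = (∑ o, pis (oc o) * (Q o * xo o))
        + (∑ co, pis (src co) * (Qco co * xc co))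
        - ∑ co, pis (dst co) * (eta co * Qco co * xc co) := by
    rw [← hA, ← hB, ← hC, ← Finset.sum_add_distrib, ← Finset.sum_sub_distrib]
    exact Finset.sum_congr rfl fun c _ => by ring
  rw [hsum]
  have e1 : ∑ o, (P o - pis (oc o)) * (Q o * xo o)
      = ∑ o, P o * Q o * xo o - ∑ o, pis (oc o) * (Q o * xo o) := by
    rw [← Finset.sum_sub_distrib]
    exact Finset.sum_congr rfl fun o _ => by ring
  have e2 : ∑ co, (eta co * pis (dst co) - pis (src co) - Pco co) * (Qco co * xc co)
      = ∑ co, pis (dst co) * (eta co * Qco co * xc co)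
        - ∑ co, pis (src co) * (Qco co * xc co)
        - ∑ co, Pco co * Qco co * xc co := by
    rw [← Finset.sum_sub_distrib, ← Finset.sum_sub_distrib]
    exact Finset.sum_congr rfl fun co _ => by ring
  rw [e1, e2]
  ring

lemma convLagrangian_update (oc : O → C) (P Q : O → ℝ) (src dst : CO → C)
    (Qco eta Pco : CO → ℝ) (pis : C → ℝ) (xo : O → ℝ) (xc : CO → ℝ)
    [DecidableEq CO] (co : CO) (t : ℝ) :
    convLagrangian oc P Q src dst Qco eta Pco pis xo (Function.update xc co t)
      - convLagrangian oc P Q src dst Qco eta Pco pis xo xc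
      = (eta co * pis (dst co) - pis (src co) - Pco co) * (Qco co * (t - xc co)) := by
  rw [convLagrangian_eq, convLagrangian_eq]
  set k : CO → ℝ := fun j => (eta j * pis (dst j) - pis (src j) - Pco j) with hk
  have h1 : ∀ (z : CO → ℝ), ∑ j, k j * (Qco j * z j)
      = k co * (Qco co * z co) + ∑ j ∈ univ.erase co, k j * (Qco j * z j) := by
    intro z
    exact (Finset.add_sum_erase univ (fun j => k j * (Qco j * z j)) (Finset.mem_univ co)).symm
  rw [h1, h1]
  have h2 : ∑ j ∈ univ.erase co, k j * (Qco j * Function.update xc co t j)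
      = ∑ j ∈ univ.erase co, k j * (Qco j * xc j) :=
    Finset.sum_congr rfl fun j hj => by
      rw [Function.update_of_ne (Finset.mem_erase.mp hj).1]
  rw [h2, Function.update_self]
  ring

/-- If `(x*, π*)` is an optimal primal/dual pair of the
single-period multi-carrier market clearing LP with conversion orders, then for
each conversion order `co` from `src co` to `dst co` with efficiency `eta co`,
price `Pco co`: a strictly positive reduced profit `η π*_{c2} − π*_{c1} − P`
forces full acceptance `x*_co = 1`, and a strictly negative one forces full
rejection `x*_co = 0`. -/
theorem stmt_2
    (oc : O → C) (P Q : O → ℝ) (src dst : CO → C) (Qco eta Pco : CO → ℝ)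
    (hQco : ∀ co, 0 < Qco co) (heta : ∀ co, 0 < eta co)
    (xo : O → ℝ) (xc : CO → ℝ) (pis : C → ℝ)
    -- primal feasibility
    (hxo : ∀ o, xo o ∈ Set.Icc (0:ℝ) 1) (hxc : ∀ co, xc co ∈ Set.Icc (0:ℝ) 1)
    (hbal : ∀ c1, convBalance oc Q src dst Qco eta xo xc c1 = 0)
    -- primal optimality
    (hopt : ∀ (yo : O → ℝ) (yc : CO → ℝ),
      (∀ o, yo o ∈ Set.Icc (0:ℝ) 1) → (∀ co, yc co ∈ Set.Icc (0:ℝ) 1) →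
      (∀ c1, convBalance oc Q src dst Qco eta yo yc c1 = 0) →
      convWelfare oc P Q Qco Pco yo yc ≤ convWelfare oc P Q Qco Pco xo xc)
    -- dual optimality of π*: the Lagrangian at π* is bounded by the primal optimum
    (hdual : ∀ (yo : O → ℝ) (yc : CO → ℝ),
      (∀ o, yo o ∈ Set.Icc (0:ℝ) 1) → (∀ co, yc co ∈ Set.Icc (0:ℝ) 1) →
      convLagrangian oc P Q src dst Qco eta Pco pis yo yc
        ≤ convWelfare oc P Q Qco Pco xo xc) :
    ∀ co : CO,
      (0 < eta co * pis (dst co) - pis (src co) - Pco co → xc co = 1) ∧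
      (eta co * pis (dst co) - pis (src co) - Pco co < 0 → xc co = 0) := by
  classical
  intro co
  set r := eta co * pis (dst co) - pis (src co) - Pco co with hr
  have hLx : convLagrangian oc P Q src dst Qco eta Pco pis xo xc
      = convWelfare oc P Q Qco Pco xo xc := by
    unfold convLagrangian; simp [hbal]
  have key : ∀ t : ℝ, t ∈ Set.Icc (0:ℝ) 1 → r * (Qco co * (t - xc co)) ≤ 0 := by
    intro t ht
    have hyc : ∀ co', Function.update xc co t co' ∈ Set.Icc (0:ℝ) 1 := by
      intro co'
      by_cases h : co' = co
      · subst h; rw [Function.update_self]; exact ht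
      · rw [Function.update_of_ne h]; exact hxc co'
    have hd := hdual xo (Function.update xc co t) hxo hyc
    rw [← hLx] at hd
    have hu := convLagrangian_update oc P Q src dst Qco eta Pco pis xo xc co t
    rw [← hr] at hu
    linarith
  obtain ⟨hx0, hx1⟩ := hxc co
  constructor
  · intro hpos
    have h1 := key 1 ⟨zero_le_one, le_refl 1⟩
    have hQ := hQco co
    nlinarith [mul_pos hpos hQ]
  · intro hneg
    have h0 := key 0 ⟨le_refl 0, zero_le_one⟩
    have hQ := hQco co
    nlinarith [mul_pos (neg_pos.mpr hneg) hQ]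


end MultiCarrierConversion
end

section
/- Given fixed market prices (π^e_t)_{t∈T} obtained as optimal duals of the balance constraints of the market clearing LP with storage orders, any optimal primal solution (x^{in,*}_{s,t}, x^{out,*}_{s,t}, e*_{s,t}) of the market clearing also optimally solves, for each storage order s, the individual profit maximization: maximize Σ_t (−Q^{in}_{s,t}) x^{in}_{s,t} η^{in}_s π^e_t − Σ_t Q^{out}_{s,t} x^{out}_{s,t} (π^e_t + P^{spread}_s) subject to 0 ≤ x^{in}_{s,t}, x^{out}_{s,t} ≤ 1, the storage energy balance e_{s,t} = e_{s,t−1} + Q^{out}_{s,t} x^{out}_{s,t} η^{out}_s + Q^{in}_{s,t} x^{in}_{s,t}, the capacity bound 0 ≤ e_{s,t} ≤ E^{max}_s, and boundary conditions e_{s,0} = e_{s,T} = E^i_s. -/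
open Finset

section Storage

variable {T : ℕ} {O S : Type*} [Fintype O] [Fintype S]

/-- Feasibility of the decisions `(xin, xout, e)` of one storage order:
acceptance ratios in `[0,1]`, storage energy balance (dynamics), capacity
bounds `0 ≤ e ≤ Emax`, and boundary conditions `e_0 = e_T = Ei`. -/
def storageFeasible (Qout Qin : Fin T → ℝ) (etain etaout Emax Ei : ℝ)
    (xin xout : Fin T → ℝ) (e : Fin (T+1) → ℝ) : Prop :=
  (∀ t, xin t ∈ Set.Icc (0:ℝ) 1) ∧ (∀ t, xout t ∈ Set.Icc (0:ℝ) 1) ∧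
  (∀ t : Fin T, e t.succ = e t.castSucc + Qout t * xout t * etaout + Qin t * xin t) ∧
  (∀ t : Fin (T+1), 0 ≤ e t ∧ e t ≤ Emax) ∧
  e 0 = Ei ∧ e (Fin.last T) = Ei

/-- Profit of a storage order at fixed electricity prices `pi`. -/
def storageProfit (Qout Qin : Fin T → ℝ) (etain Pspread : ℝ)
    (pi : Fin T → ℝ) (xin xout : Fin T → ℝ) : ℝ :=
  ∑ t, (-(Qin t)) * xin t * etain * pi t
  - ∑ t, Qout t * xout t * (pi t + Pspread)

/-- Welfare of the market clearing LP with storage orders. -/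
def storageWelfare (P Q : O → Fin T → ℝ) (Qout : S → Fin T → ℝ)
    (Pspread : S → ℝ) (xo : O → Fin T → ℝ) (xout : S → Fin T → ℝ) : ℝ :=
  ∑ t, ∑ o, P o t * Q o t * xo o t
  - ∑ s, ∑ t, Pspread s * Qout s t * xout s t

/-- Violation of the electricity balance constraint at period `t`. -/
def storageBalance (Q : O → Fin T → ℝ) (Qout Qin : S → Fin T → ℝ)
    (etain : S → ℝ) (xo : O → Fin T → ℝ) (xin xout : S → Fin T → ℝ)
    (t : Fin T) : ℝ :=
  ∑ o, Q o t * xo o t + ∑ s, Qout s t * xout s t + ∑ s, Qin s t * xin s t * etain s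

lemma sum_update2 {α β : Type*} [DecidableEq S] (f : S → α) (g : S → β)
    (h : S → α → β → ℝ) (s : S) (v : α) (w : β) :
    ∑ s', h s' (Function.update f s v s') (Function.update g s w s')
      = ∑ s', h s' (f s') (g s') + (h s v w - h s (f s) (g s)) := by
  rw [← Finset.sum_erase_add _ _ (Finset.mem_univ s),
      ← Finset.sum_erase_add Finset.univ (fun s' => h s' (f s') (g s')) (Finset.mem_univ s)]
  rw [Finset.sum_congr rfl (fun s' hs' => by
    rw [Function.update_of_ne (Finset.ne_of_mem_erase hs'),
        Function.update_of_ne (Finset.ne_of_mem_erase hs')])]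
  simp only [Function.update_self]
  ring

lemma lagrangian_expand (P Q : O → Fin T → ℝ) (Qout Qin : S → Fin T → ℝ)
    (etain Pspread : S → ℝ) (pi : Fin T → ℝ)
    (xo : O → Fin T → ℝ) (zin zout : S → Fin T → ℝ) :
    storageWelfare P Q Qout Pspread xo zout
      - ∑ t, pi t * storageBalance Q Qout Qin etain xo zin zout t
    = (∑ t, ∑ o, P o t * Q o t * xo o t - ∑ t, ∑ o, pi t * (Q o t * xo o t))
      + ∑ s', storageProfit (Qout s') (Qin s') (etain s') (Pspread s') pi (zin s') (zout s') := by
  have h1 : (∑ s', ∑ t, Pspread s' * Qout s' t * zout s' t)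
      = ∑ t, ∑ s', Pspread s' * Qout s' t * zout s' t := Finset.sum_comm
  have h2 : (∑ s', storageProfit (Qout s') (Qin s') (etain s') (Pspread s') pi (zin s') (zout s'))
      = ∑ t, ∑ s', ((-(Qin s' t)) * zin s' t * etain s' * pi t
          - Qout s' t * zout s' t * (pi t + Pspread s')) := by
    unfold storageProfit
    simp only [← Finset.sum_sub_distrib]
    exact Finset.sum_comm
  rw [h2]
  unfold storageWelfare storageBalance
  rw [h1]
  simp only [mul_add, Finset.mul_sum, Finset.sum_sub_distrib, Finset.sum_add_distrib]
  ring_nf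
  have e1 : (∑ t : Fin T, ∑ s' : S, -(Qin s' t * zin s' t * etain s' * pi t))
      = -∑ t : Fin T, ∑ s' : S, pi t * Qin s' t * zin s' t * etain s' := by
    rw [← Finset.sum_neg_distrib]
    exact Finset.sum_congr rfl fun t _ => by
      rw [← Finset.sum_neg_distrib]; exact Finset.sum_congr rfl fun s' _ => by ring
  have e2 : (∑ t : Fin T, ∑ s' : S, Qout s' t * zout s' t * pi t)
      = ∑ t : Fin T, ∑ s' : S, pi t * Qout s' t * zout s' t :=
    Finset.sum_congr rfl fun t _ => Finset.sum_congr rfl fun s' _ => by ring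
  have e3 : (∑ t : Fin T, ∑ s' : S, Qout s' t * zout s' t * Pspread s')
      = ∑ t : Fin T, ∑ s' : S, Pspread s' * Qout s' t * zout s' t :=
    Finset.sum_congr rfl fun t _ => Finset.sum_congr rfl fun s' _ => by ring
  rw [e1, e2, e3]; ring


/-- Given fixed market prices `π` obtained as optimal duals of
the balance constraints of the market clearing LP with storage orders, any
optimal primal solution also optimally solves the individual profit
maximisation of each storage order `s`. -/
theorem stmt_4
    (P Q : O → Fin T → ℝ) (Qout Qin : S → Fin T → ℝ)
    (etain etaout Pspread Emax Ei : S → ℝ)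
    (hQout : ∀ s t, 0 < Qout s t) (hQin : ∀ s t, Qin s t < 0)
    (hin : ∀ s, etain s ∈ Set.Ioc (0:ℝ) 1) (hout : ∀ s, etaout s ∈ Set.Ioc (0:ℝ) 1)
    (hsp : ∀ s, 0 ≤ Pspread s)
    (xo : O → Fin T → ℝ) (xin xout : S → Fin T → ℝ) (e : S → Fin (T+1) → ℝ)
    (pi : Fin T → ℝ)
    -- primal feasibility
    (hxo : ∀ o t, xo o t ∈ Set.Icc (0:ℝ) 1)
    (hst : ∀ s, storageFeasible (Qout s) (Qin s) (etain s) (etaout s)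
        (Emax s) (Ei s) (xin s) (xout s) (e s))
    (hbal : ∀ t, storageBalance Q Qout Qin etain xo xin xout t = 0)
    -- primal optimality
    (hopt : ∀ (yo : O → Fin T → ℝ) (yin yout : S → Fin T → ℝ)
        (ee : S → Fin (T+1) → ℝ),
      (∀ o t, yo o t ∈ Set.Icc (0:ℝ) 1) →
      (∀ s, storageFeasible (Qout s) (Qin s) (etain s) (etaout s)
          (Emax s) (Ei s) (yin s) (yout s) (ee s)) →
      (∀ t, storageBalance Q Qout Qin etain yo yin yout t = 0) →
      storageWelfare P Q Qout Pspread yo yout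
        ≤ storageWelfare P Q Qout Pspread xo xout)
    -- dual optimality of π: the Lagrangian at π is bounded by the primal optimum
    (hdual : ∀ (yo : O → Fin T → ℝ) (yin yout : S → Fin T → ℝ)
        (ee : S → Fin (T+1) → ℝ),
      (∀ o t, yo o t ∈ Set.Icc (0:ℝ) 1) →
      (∀ s, storageFeasible (Qout s) (Qin s) (etain s) (etaout s)
          (Emax s) (Ei s) (yin s) (yout s) (ee s)) →
      storageWelfare P Q Qout Pspread yo yout
          - ∑ t, pi t * storageBalance Q Qout Qin etain yo yin yout t
        ≤ storageWelfare P Q Qout Pspread xo xout) :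
    ∀ s : S, ∀ (yin yout : Fin T → ℝ) (ee : Fin (T+1) → ℝ),
      storageFeasible (Qout s) (Qin s) (etain s) (etaout s)
          (Emax s) (Ei s) yin yout ee →
      storageProfit (Qout s) (Qin s) (etain s) (Pspread s) pi yin yout
        ≤ storageProfit (Qout s) (Qin s) (etain s) (Pspread s) pi (xin s) (xout s) := by
  classical
  intro s yin yout ee hfeas
  have hfeas' : ∀ s', storageFeasible (Qout s') (Qin s') (etain s') (etaout s')
      (Emax s') (Ei s') (Function.update xin s yin s') (Function.update xout s yout s')
      (Function.update e s ee s') := by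
    intro s'
    by_cases h : s' = s
    · subst h; simpa using hfeas
    · simpa [Function.update_of_ne h] using hst s'
  have hd := hdual xo (Function.update xin s yin) (Function.update xout s yout)
      (Function.update e s ee) hxo hfeas'
  rw [lagrangian_expand] at hd
  have hx := lagrangian_expand P Q Qout Qin etain Pspread pi xo xin xout
  have hzero : (∑ t, pi t * storageBalance Q Qout Qin etain xo xin xout t) = 0 := by
    simp [hbal]
  rw [hzero, sub_zero] at hx
  have hup : (∑ s', storageProfit (Qout s') (Qin s') (etain s') (Pspread s') pi
        (Function.update xin s yin s') (Function.update xout s yout s'))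
      = (∑ s', storageProfit (Qout s') (Qin s') (etain s') (Pspread s') pi (xin s') (xout s'))
        + (storageProfit (Qout s) (Qin s) (etain s) (Pspread s) pi yin yout
          - storageProfit (Qout s) (Qin s) (etain s) (Pspread s) pi (xin s) (xout s)) :=
    sum_update2 xin xout
      (fun s' a b => storageProfit (Qout s') (Qin s') (etain s') (Pspread s') pi a b) s yin yout
  rw [hup] at hd
  linarith

end Storage
end

section
/- Given fixed prices π^g, π^e, π^h obtained as optimal duals of the market clearing LP with a pro-rata constraint linking a gas-to-electricity conversion order and a gas-to-heat conversion order, the optimal primal acceptance ratios x*^{g→e}, x*^{g→h} also solve the individual problem: maximize ((η^{g→e}π^e − π^g) − P^{g→e}) Q^{g→e} x^{g→e} + ((η^{g→h}π^h − π^g) − P^{g→h}) Q^{g→h} x^{g→h} subject to 0 ≤ x^{g→e}, x^{g→h} ≤ 1 and x^{g→e} = x^{g→h}. -/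
open Finset

section ProRata

variable {Og Oe Oh : Type*} [Fintype Og] [Fintype Oe] [Fintype Oh]

/-- Given fixed prices `πg, πe, πh` obtained as optimal duals
of the market clearing LP with a pro-rata constraint linking a
gas-to-electricity conversion order and a gas-to-heat conversion order, the
optimal primal acceptance ratios `x*ᵍ→ᵉ, x*ᵍ→ʰ` also solve the individual
profit maximisation problem of the pro-rata constrained market participant. -/
theorem stmt_5
    (Pg Qg : Og → ℝ) (Pe Qe : Oe → ℝ) (Ph Qh : Oh → ℝ)
    (Qge Qgh : ℝ) (etage etagh : ℝ) (Pge Pgh : ℝ)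
    (hQge : 0 < Qge) (hQgh : 0 < Qgh)
    (xg : Og → ℝ) (xe : Oe → ℝ) (xh : Oh → ℝ) (xge xgh : ℝ)
    (pig pie pih : ℝ)
    -- primal feasibility: bounds, pro-rata constraint, balance constraints
    (hxg : ∀ o, xg o ∈ Set.Icc (0:ℝ) 1) (hxe : ∀ o, xe o ∈ Set.Icc (0:ℝ) 1)
    (hxh : ∀ o, xh o ∈ Set.Icc (0:ℝ) 1)
    (hxge : xge ∈ Set.Icc (0:ℝ) 1) (hxgh : xgh ∈ Set.Icc (0:ℝ) 1)
    (hpr : xge = xgh)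
    (hbg : ∑ o, Qg o * xg o + Qge * xge + Qgh * xgh = 0)
    (hbe : ∑ o, Qe o * xe o - etage * Qge * xge = 0)
    (hbh : ∑ o, Qh o * xh o - etagh * Qgh * xgh = 0)
    -- primal optimality
    (hopt : ∀ (yg : Og → ℝ) (ye : Oe → ℝ) (yh : Oh → ℝ) (yge ygh : ℝ),
      (∀ o, yg o ∈ Set.Icc (0:ℝ) 1) → (∀ o, ye o ∈ Set.Icc (0:ℝ) 1) →
      (∀ o, yh o ∈ Set.Icc (0:ℝ) 1) →
      yge ∈ Set.Icc (0:ℝ) 1 → ygh ∈ Set.Icc (0:ℝ) 1 → yge = ygh →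
      (∑ o, Qg o * yg o + Qge * yge + Qgh * ygh = 0) →
      (∑ o, Qe o * ye o - etage * Qge * yge = 0) →
      (∑ o, Qh o * yh o - etagh * Qgh * ygh = 0) →
      (∑ o, Pg o * Qg o * yg o + ∑ o, Pe o * Qe o * ye o + ∑ o, Ph o * Qh o * yh o
          - Pge * Qge * yge - Pgh * Qgh * ygh)
        ≤ (∑ o, Pg o * Qg o * xg o + ∑ o, Pe o * Qe o * xe o + ∑ o, Ph o * Qh o * xh o
          - Pge * Qge * xge - Pgh * Qgh * xgh))
    -- dual optimality of (πg, πe, πh): Lagrangian bounded by the primal optimum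
    (hdual : ∀ (yg : Og → ℝ) (ye : Oe → ℝ) (yh : Oh → ℝ) (yge ygh : ℝ),
      (∀ o, yg o ∈ Set.Icc (0:ℝ) 1) → (∀ o, ye o ∈ Set.Icc (0:ℝ) 1) →
      (∀ o, yh o ∈ Set.Icc (0:ℝ) 1) →
      yge ∈ Set.Icc (0:ℝ) 1 → ygh ∈ Set.Icc (0:ℝ) 1 → yge = ygh →
      (∑ o, Pg o * Qg o * yg o + ∑ o, Pe o * Qe o * ye o + ∑ o, Ph o * Qh o * yh o
          - Pge * Qge * yge - Pgh * Qgh * ygh)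
          - pig * (∑ o, Qg o * yg o + Qge * yge + Qgh * ygh)
          - pie * (∑ o, Qe o * ye o - etage * Qge * yge)
          - pih * (∑ o, Qh o * yh o - etagh * Qgh * ygh)
        ≤ (∑ o, Pg o * Qg o * xg o + ∑ o, Pe o * Qe o * xe o + ∑ o, Ph o * Qh o * xh o
          - Pge * Qge * xge - Pgh * Qgh * xgh)) :
    -- conclusion: (x*ᵍ→ᵉ, x*ᵍ→ʰ) solves the individual pro-rata problem
    ∀ yge ygh : ℝ, yge ∈ Set.Icc (0:ℝ) 1 → ygh ∈ Set.Icc (0:ℝ) 1 → yge = ygh →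
      ((etage * pie - pig) - Pge) * Qge * yge + ((etagh * pih - pig) - Pgh) * Qgh * ygh
        ≤ ((etage * pie - pig) - Pge) * Qge * xge
          + ((etagh * pih - pig) - Pgh) * Qgh * xgh := by
  intro yge ygh hy1 hy2 hy
  have h := hdual xg xe xh yge ygh hxg hxe hxh hy1 hy2 hy
  have e1 : ∑ o, Qg o * xg o = -(Qge * xge + Qgh * xgh) := by linarith
  have e2 : ∑ o, Qe o * xe o = etage * Qge * xge := by linarith
  have e3 : ∑ o, Qh o * xh o = etagh * Qgh * xgh := by linarith
  rw [e1, e2, e3] at h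
  ring_nf at h ⊢
  linarith

end ProRata
end

section
/- Given fixed prices π^g, π^e, π^h obtained as optimal duals of the market clearing LP with a cumulative constraint x^{g→e} + x^{g→h} ≤ 1 linking gas-to-electricity and gas-to-heat conversion orders of a CHP, the optimal primal acceptance ratios also solve: maximize ((η^{g→e}π^e − π^g) − P^{g→e}) Q x^{g→e} + ((η^{g→h}π^h − π^g) − P^{g→h}) Q x^{g→h} subject to x^{g→e} + x^{g→h} ≤ 1 and x^{g→e}, x^{g→h} ≥ 0. -/
open Finset

section Cumulative

variable {Og Oe Oh : Type*} [Fintype Og] [Fintype Oe] [Fintype Oh]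

/-- Given fixed prices `πg, πe, πh` obtained as optimal duals
of the market clearing LP with a cumulative constraint `xᵍ→ᵉ + xᵍ→ʰ ≤ 1`
linking the gas-to-electricity and gas-to-heat conversion orders of a CHP with
total conversion capacity `Q > 0`, the optimal primal acceptance ratios also
solve the CHP's individual profit maximisation problem. -/
theorem stmt_6
    (Pg Qg : Og → ℝ) (Pe Qe : Oe → ℝ) (Ph Qh : Oh → ℝ)
    (Q : ℝ) (etage etagh : ℝ) (Pge Pgh : ℝ) (hQ : 0 < Q)
    (xg : Og → ℝ) (xe : Oe → ℝ) (xh : Oh → ℝ) (xge xgh : ℝ)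
    (pig pie pih : ℝ)
    -- primal feasibility: bounds, cumulative constraint, balance constraints
    (hxg : ∀ o, xg o ∈ Set.Icc (0:ℝ) 1) (hxe : ∀ o, xe o ∈ Set.Icc (0:ℝ) 1)
    (hxh : ∀ o, xh o ∈ Set.Icc (0:ℝ) 1)
    (hxge : 0 ≤ xge) (hxgh : 0 ≤ xgh) (hcum : xge + xgh ≤ 1)
    (hbg : ∑ o, Qg o * xg o + Q * xge + Q * xgh = 0)
    (hbe : ∑ o, Qe o * xe o - etage * Q * xge = 0)
    (hbh : ∑ o, Qh o * xh o - etagh * Q * xgh = 0)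
    -- primal optimality
    (hopt : ∀ (yg : Og → ℝ) (ye : Oe → ℝ) (yh : Oh → ℝ) (yge ygh : ℝ),
      (∀ o, yg o ∈ Set.Icc (0:ℝ) 1) → (∀ o, ye o ∈ Set.Icc (0:ℝ) 1) →
      (∀ o, yh o ∈ Set.Icc (0:ℝ) 1) →
      0 ≤ yge → 0 ≤ ygh → yge + ygh ≤ 1 →
      (∑ o, Qg o * yg o + Q * yge + Q * ygh = 0) →
      (∑ o, Qe o * ye o - etage * Q * yge = 0) →
      (∑ o, Qh o * yh o - etagh * Q * ygh = 0) →
      (∑ o, Pg o * Qg o * yg o + ∑ o, Pe o * Qe o * ye o + ∑ o, Ph o * Qh o * yh o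
          - Pge * Q * yge - Pgh * Q * ygh)
        ≤ (∑ o, Pg o * Qg o * xg o + ∑ o, Pe o * Qe o * xe o + ∑ o, Ph o * Qh o * xh o
          - Pge * Q * xge - Pgh * Q * xgh))
    -- dual optimality of (πg, πe, πh): Lagrangian bounded by the primal optimum
    (hdual : ∀ (yg : Og → ℝ) (ye : Oe → ℝ) (yh : Oh → ℝ) (yge ygh : ℝ),
      (∀ o, yg o ∈ Set.Icc (0:ℝ) 1) → (∀ o, ye o ∈ Set.Icc (0:ℝ) 1) →
      (∀ o, yh o ∈ Set.Icc (0:ℝ) 1) →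
      0 ≤ yge → 0 ≤ ygh → yge + ygh ≤ 1 →
      (∑ o, Pg o * Qg o * yg o + ∑ o, Pe o * Qe o * ye o + ∑ o, Ph o * Qh o * yh o
          - Pge * Q * yge - Pgh * Q * ygh)
          - pig * (∑ o, Qg o * yg o + Q * yge + Q * ygh)
          - pie * (∑ o, Qe o * ye o - etage * Q * yge)
          - pih * (∑ o, Qh o * yh o - etagh * Q * ygh)
        ≤ (∑ o, Pg o * Qg o * xg o + ∑ o, Pe o * Qe o * xe o + ∑ o, Ph o * Qh o * xh o
          - Pge * Q * xge - Pgh * Q * xgh)) :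
    -- conclusion: (x*ᵍ→ᵉ, x*ᵍ→ʰ) solves the individual cumulative problem
    ∀ yge ygh : ℝ, 0 ≤ yge → 0 ≤ ygh → yge + ygh ≤ 1 →
      ((etage * pie - pig) - Pge) * Q * yge + ((etagh * pih - pig) - Pgh) * Q * ygh
        ≤ ((etage * pie - pig) - Pge) * Q * xge
          + ((etagh * pih - pig) - Pgh) * Q * xgh := by
  intro yge ygh hyge hygh hy
  have h := hdual xg xe xh yge ygh hxg hxe hxh hyge hygh hy
  have e1 : pig * (∑ o, Qg o * xg o + Q * xge + Q * xgh) = 0 := by rw [hbg]; ring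
  have e2 : pie * (∑ o, Qe o * xe o - etage * Q * xge) = 0 := by rw [hbe]; ring
  have e3 : pih * (∑ o, Qh o * xh o - etagh * Q * xgh) = 0 := by rw [hbh]; ring
  ring_nf at h e1 e2 e3 ⊢
  linarith

end Cumulative
end

section
/- If all conversion orders between two carriers c1 and c2 have conversion efficiency 1 and zero conversion cost, and in the optimal market outcome some conversion order from c1 to c2 is strictly partially accepted (0 < x*_co < 1), then the optimal dual prices satisfy π*_{c2} = π*_{c1} (full price convergence between the two carrier markets). -/
open Finset

section PriceConvergence

variable {C O CO : Type*} [Fintype C] [Fintype O] [Fintype CO] [DecidableEq C]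

lemma sum_mul_update {CO : Type*} [DecidableEq CO] (s : Finset CO) (g : CO → ℝ)
    (co : CO) (t : ℝ) (xc : CO → ℝ) :
    ∑ i ∈ s, g i * Function.update xc co t i
      = ∑ i ∈ s, g i * xc i + (if co ∈ s then g co * (t - xc co) else 0) := by
  by_cases h : co ∈ s
  · rw [if_pos h, ← Finset.sum_erase_add _ _ h,
      ← Finset.sum_erase_add _ (fun i => g i * xc i) h]
    rw [Finset.sum_congr rfl (fun i hi => by
      rw [Function.update_of_ne (Finset.ne_of_mem_erase hi)])]
    rw [Function.update_self]; ring
  · rw [if_neg h, add_zero]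
    refine Finset.sum_congr rfl fun i hi => ?_
    rw [Function.update_of_ne]; rintro rfl; exact h hi

lemma lagrangian_update {C O CO : Type*} [Fintype C] [Fintype O] [Fintype CO]
    [DecidableEq C] [DecidableEq CO]
    (oc : O → C) (P Q : O → ℝ) (src dst : CO → C) (Qco eta Pco : CO → ℝ)
    (pis : C → ℝ) (xo : O → ℝ) (xc : CO → ℝ) (co : CO) (t : ℝ) :
    convLagrangian oc P Q src dst Qco eta Pco pis xo (Function.update xc co t)
      = convLagrangian oc P Q src dst Qco eta Pco pis xo xc
        + (t - xc co) * (eta co * Qco co * pis (dst co) - Qco co * pis (src co)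
            - Pco co * Qco co) := by
  unfold convLagrangian convWelfare convBalance
  rw [sum_mul_update (g := fun i => Pco i * Qco i)]
  have h1 : ∀ c : C,
      ∑ i ∈ univ.filter (fun i => src i = c), Qco i * Function.update xc co t i
        = ∑ i ∈ univ.filter (fun i => src i = c), Qco i * xc i
          + (if src co = c then Qco co * (t - xc co) else 0) := by
    intro c
    rw [sum_mul_update (g := fun i => Qco i)]
    simp [Finset.mem_filter]
  have h2 : ∀ c : C,
      ∑ i ∈ univ.filter (fun i => dst i = c), eta i * Qco i * Function.update xc co t i
        = ∑ i ∈ univ.filter (fun i => dst i = c), eta i * Qco i * xc i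
          + (if dst co = c then eta co * Qco co * (t - xc co) else 0) := by
    intro c
    rw [sum_mul_update (g := fun i => eta i * Qco i)]
    simp [Finset.mem_filter]
  simp only [h1, h2, Finset.mem_univ, ite_true]
  have h3 : ∑ c, pis c * (if src co = c then Qco co * (t - xc co) else 0)
      = pis (src co) * (Qco co * (t - xc co)) := by
    simp [mul_ite, Finset.sum_ite_eq]
  have h4 : ∑ c, pis c * (if dst co = c then eta co * Qco co * (t - xc co) else 0)
      = pis (dst co) * (eta co * Qco co * (t - xc co)) := by
    simp [mul_ite, Finset.sum_ite_eq]
  have h5 : ∀ c, pis c *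
      ((∑ o ∈ univ.filter (fun o => oc o = c), Q o * xo o
        + (∑ i ∈ univ.filter (fun i => src i = c), Qco i * xc i
            + (if src co = c then Qco co * (t - xc co) else 0))
        - (∑ i ∈ univ.filter (fun i => dst i = c), eta i * Qco i * xc i
            + (if dst co = c then eta co * Qco co * (t - xc co) else 0))))
      = pis c * (∑ o ∈ univ.filter (fun o => oc o = c), Q o * xo o
          + ∑ i ∈ univ.filter (fun i => src i = c), Qco i * xc i
          - ∑ i ∈ univ.filter (fun i => dst i = c), eta i * Qco i * xc i)
        + pis c * (if src co = c then Qco co * (t - xc co) else 0)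
        - pis c * (if dst co = c then eta co * Qco co * (t - xc co) else 0) := by
    intro c; ring
  rw [Finset.sum_congr rfl (fun c _ => h5 c), Finset.sum_sub_distrib,
    Finset.sum_add_distrib, h3, h4]
  ring

/-- If all conversion orders between carriers `c1` and `c2`
have conversion efficiency `1` and zero conversion cost, and in the optimal
market outcome some conversion order from `c1` to `c2` is strictly partially
accepted (`0 < x*_co < 1`), then the optimal dual prices satisfy
`π*_{c2} = π*_{c1}` (full price convergence). -/
theorem stmt_12
    (oc : O → C) (P Q : O → ℝ) (src dst : CO → C) (Qco eta Pco : CO → ℝ)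
    (hQco : ∀ co, 0 < Qco co)
    (xo : O → ℝ) (xc : CO → ℝ) (pis : C → ℝ)
    -- primal feasibility
    (hxo : ∀ o, xo o ∈ Set.Icc (0:ℝ) 1) (hxc : ∀ co, xc co ∈ Set.Icc (0:ℝ) 1)
    (hbal : ∀ c1, convBalance oc Q src dst Qco eta xo xc c1 = 0)
    -- primal optimality
    (hopt : ∀ (yo : O → ℝ) (yc : CO → ℝ),
      (∀ o, yo o ∈ Set.Icc (0:ℝ) 1) → (∀ co, yc co ∈ Set.Icc (0:ℝ) 1) →
      (∀ c1, convBalance oc Q src dst Qco eta yo yc c1 = 0) →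
      convWelfare oc P Q Qco Pco yo yc ≤ convWelfare oc P Q Qco Pco xo xc)
    -- dual optimality of π*
    (hdual : ∀ (yo : O → ℝ) (yc : CO → ℝ),
      (∀ o, yo o ∈ Set.Icc (0:ℝ) 1) → (∀ co, yc co ∈ Set.Icc (0:ℝ) 1) →
      convLagrangian oc P Q src dst Qco eta Pco pis yo yc
        ≤ convWelfare oc P Q Qco Pco xo xc)
    (c1 c2 : C)
    -- all conversion orders between c1 and c2 are lossless and costless
    (hall : ∀ co, src co = c1 → dst co = c2 → eta co = 1 ∧ Pco co = 0)
    -- some conversion order from c1 to c2 is strictly partially accepted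
    (co : CO) (hsrc : src co = c1) (hdst : dst co = c2)
    (hfrac : 0 < xc co ∧ xc co < 1) :
    pis c2 = pis c1 := by
  classical
  obtain ⟨heta, hPco⟩ := hall co hsrc hdst
  set K : ℝ := eta co * Qco co * pis (dst co) - Qco co * pis (src co)
      - Pco co * Qco co with hK
  -- Lagrangian at x equals welfare at x
  have hLx : convLagrangian oc P Q src dst Qco eta Pco pis xo xc
      = convWelfare oc P Q Qco Pco xo xc := by
    unfold convLagrangian
    simp [hbal]
  -- for any feasible t, (t - xc co) * K ≤ 0
  have key : ∀ t : ℝ, 0 ≤ t → t ≤ 1 → (t - xc co) * K ≤ 0 := by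
    intro t h0 h1
    have hfeas : ∀ co', Function.update xc co t co' ∈ Set.Icc (0:ℝ) 1 := by
      intro co'
      by_cases h : co' = co
      · subst h; rw [Function.update_self]; exact ⟨h0, h1⟩
      · rw [Function.update_of_ne h]; exact hxc co'
    have := hdual xo (Function.update xc co t) hxo hfeas
    rw [lagrangian_update, hLx, ← hK] at this
    linarith
  have hKge : 0 ≤ K := by
    have := key (xc co / 2) (by linarith [hfrac.1]) (by linarith [hfrac.2])
    nlinarith [hfrac.1]
  have hKle : K ≤ 0 := by
    have := key ((xc co + 1) / 2) (by linarith [hfrac.1]) (by linarith [hfrac.2])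
    nlinarith [hfrac.2]
  have hK0 : K = 0 := le_antisymm hKle hKge
  rw [hK, hsrc, hdst, heta, hPco] at hK0
  have hq := (hQco co).ne'
  have : Qco co * (pis c2 - pis c1) = 0 := by linarith
  have := mul_eq_zero.mp this
  rcases this with h | h
  · exact absurd h hq
  · linarith

end PriceConvergence
end
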